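/- Let X = {1,2,3,4}, ν₁, ν₂ ∈ (0,1) with ν₁ + ν₂ = 1/2, ν = (ν₁, ν₂, ν₁, ν₂), and let R be the 4×4 matrix with rows R₁ = (ν₁, ν₂, 0, 0), R₂ = (2ν₁, 2ν₂, 0, 0), R₃ = (0, 0, ν₁, ν₂), R₄ = (0, 0, 2ν₁, 2ν₂). Let (Xₙ)ₙ≥1 be the MVPS(1, ν, R), i.e. X₁ ∼ ν and Pₙ(·) := P(X_{n+1} ∈ · | X₁,…,Xₙ) = (ν(·) + Σᵢ₌₁ⁿ R_{Xᵢ}(·))/(1 + Σᵢ₌₁ⁿ R_{Xᵢ}(X)). Then for every x ∈ X, (Pₙ({x}))ₙ≥0 is a martingale with respect to the natural filtration, i.e. (Xₙ) is conditionally identically distributed; yet R₁(X) = 1/2 ≠ 1 = R₂(X), so the MVPS is not balanced. -/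

import Mathlib

open MeasureTheory Finset


lemma mvps_ind_mem {γ : Type*} {S : Set γ} {u : γ} (h : u ∈ S) :
    Set.indicator S (fun _ => (1:ℝ)) u = 1 := Set.indicator_of_mem h _

lemma mvps_ind_bound {γ : Type*} (S : Set γ) (u : γ) :
    0 ≤ Set.indicator S (fun _ => (1:ℝ)) u ∧ Set.indicator S (fun _ => (1:ℝ)) u ≤ 1 := by
  by_cases h : u ∈ S
  · simp [Set.indicator_of_mem h]
  · simp [Set.indicator_of_notMem h]

lemma mvps_integrable_of_bdd {Ω : Type*} [MeasurableSpace Ω] {P : Measure Ω} [IsFiniteMeasure P]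
    {h : Ω → ℝ} (hm : Measurable h) {C : ℝ} (hb : ∀ ω, |h ω| ≤ C) : Integrable h P :=
  ⟨hm.aestronglyMeasurable, HasFiniteIntegral.of_bounded (C := C)
    (ae_of_all _ fun ω => by rw [Real.norm_eq_abs]; exact hb ω)⟩

lemma mvps_sum_pick' (c : Fin 4 → ℝ) (u : Fin 4) (r : ℝ) :
    ∑ z : Fin 4, c z * (Set.indicator {z} (fun _ => (1:ℝ)) u * r) = c u * r := by
  rw [Finset.sum_eq_single u]
  · rw [mvps_ind_mem (Set.mem_singleton u), one_mul]
  · intro z _ hz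
    rw [Set.indicator_of_notMem (by simp [Set.mem_singleton_iff]; exact Ne.symm hz),
      zero_mul, mul_zero]
  · intro h; exact absurd (Finset.mem_univ u) h

set_option maxHeartbeats 1000000 in
lemma mvps_key_alg (ν₁ α β d : ℝ) (h1 : 0 < ν₁) (h1' : ν₁ < 1/2)
    (hα : (1:ℝ) ≤ α) (hβ : (1:ℝ) ≤ β) (hd : α + β = 2*d)
    (R : Fin 4 → Fin 4 → ℝ) (ν₂ : ℝ) (hν2 : ν₂ = 1/2 - ν₁)
    (hR : R = ![![ν₁, ν₂, 0, 0], ![2 * ν₁, 2 * ν₂, 0, 0],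
                ![0, 0, ν₁, ν₂], ![0, 0, 2 * ν₁, 2 * ν₂]]) (x : Fin 4) :
    ∑ z : Fin 4, (![α*ν₁, α*ν₂, β*ν₁, β*ν₂] x + R z x) / (d + ∑ y, R z y)
        * (![α*ν₁, α*ν₂, β*ν₁, β*ν₂] z / d)
      = ![α*ν₁, α*ν₂, β*ν₁, β*ν₂] x / d := by
  subst hR hν2
  have hβ' : β = 2*d - α := by linarith
  subst hβ'
  have hd1 : d ≠ 0 := by linarith
  have hd2 : d + 2⁻¹ ≠ 0 := by
    have : (2:ℝ)⁻¹ = 1/2 := by norm_num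
    rw [this]; linarith
  have hd3 : d + 1 ≠ 0 := by linarith
  have hd0 : (1:ℝ) ≤ d := by linarith
  have hd4 : d + d^2*2 ≠ 0 := by nlinarith
  have hd5 : d + d^2 ≠ 0 := by nlinarith
  have hd6 : (1:ℝ) + d ≠ 0 := by linarith
  have hd7 : (1:ℝ) + d*2 ≠ 0 := by linarith
  fin_cases x <;>
  · simp [Fin.sum_univ_four, Matrix.vecHead, Matrix.vecTail]
    rw [show 2*ν₁ + 2*((2:ℝ)⁻¹ - ν₁) = (1:ℝ) from by ring]
    field_simp
    ring


/-- The four-color unbalanced MVPS with initial composition `ν = (ν₁, ν₂, ν₁, ν₂)`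
(`ν₁ + ν₂ = 1/2`) and block reinforcement matrix `R` as in Example 4.11:
the predictive probabilities of every color form a martingale (the process is c.i.d.),
yet the model is unbalanced since rows 1 and 2 of `R` have total masses `1/2 ≠ 1`. -/
theorem unbalanced_cid_mvps_example
    {Ω : Type*} [MeasurableSpace Ω]
    (P : Measure Ω) [IsProbabilityMeasure P]
    (ν₁ ν₂ : ℝ) (h1 : 0 < ν₁) (h1' : ν₁ < 1) (h2 : 0 < ν₂) (h2' : ν₂ < 1)
    (hsum : ν₁ + ν₂ = 1 / 2)
    (ν : Fin 4 → ℝ) (hν : ν = ![ν₁, ν₂, ν₁, ν₂])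
    (R : Fin 4 → Fin 4 → ℝ)
    (hR : R = ![![ν₁, ν₂, 0, 0], ![2 * ν₁, 2 * ν₂, 0, 0],
                ![0, 0, ν₁, ν₂], ![0, 0, 2 * ν₁, 2 * ν₂]])
    (Xseq : ℕ → Ω → Fin 4) (hXmeas : ∀ n, Measurable (Xseq n))
    -- X₁ ∼ ν
    (hinit : ∀ x : Fin 4, (P {ω | Xseq 0 ω = x}).toReal = ν x)
    -- predictive distributions of the MVPS(1, ν, R), in integrated (test-set) form
    (hpred : ∀ n : ℕ, ∀ x : Fin 4, ∀ S : Set (Fin n → Fin 4), MeasurableSet S →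
      ∫ ω, Set.indicator {x} (fun _ => (1 : ℝ)) (Xseq n ω) *
          Set.indicator S (fun _ => (1 : ℝ)) (fun i : Fin n => Xseq i ω) ∂P
        = ∫ ω, ((ν x + ∑ i ∈ range n, R (Xseq i ω) x) /
              (1 + ∑ i ∈ range n, ∑ y, R (Xseq i ω) y)) *
            Set.indicator S (fun _ => (1 : ℝ)) (fun i : Fin n => Xseq i ω) ∂P) :
    -- (Pₙ({x}))ₙ is a martingale w.r.t. the natural filtration: the process is c.i.d.
    (∀ x : Fin 4, ∀ n : ℕ,
      (P[(fun ω => (ν x + ∑ i ∈ range (n + 1), R (Xseq i ω) x) /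
            (1 + ∑ i ∈ range (n + 1), ∑ y, R (Xseq i ω) y)) |
          MeasurableSpace.comap (fun ω (i : Fin n) => Xseq i ω) inferInstance])
        =ᵐ[P] fun ω => (ν x + ∑ i ∈ range n, R (Xseq i ω) x) /
            (1 + ∑ i ∈ range n, ∑ y, R (Xseq i ω) y)) ∧
    -- yet the MVPS is unbalanced: total masses of rows 1 and 2 differ
    (∑ y, R 0 y = 1 / 2) ∧ (∑ y, R 1 y = 1) := by
  have hν2 : ν₂ = 1/2 - ν₁ := by linarith
  have h12 : ν₁ < 1/2 := by linarith
  have Rnn : ∀ z y : Fin 4, 0 ≤ R z y := by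
    intro z y; fin_cases z <;> fin_cases y <;> simp [hR, Matrix.vecHead, Matrix.vecTail] <;> linarith
  have hν0 : ∀ u : Fin 4, 0 ≤ ν u := by
    intro u; fin_cases u <;> simp [hν] <;> linarith
  have hν1 : ∀ u : Fin 4, ν u ≤ 1 := by
    intro u; fin_cases u <;> simp [hν] <;> linarith
  refine ⟨?_, ?_, ?_⟩
  · intro x n
    classical
    have hVmeas : Measurable (fun ω (i : Fin n) => Xseq i ω) :=
      measurable_pi_lambda _ fun i => hXmeas i
    set w : Fin 4 → ℝ := ![1,2,0,0] with hw
    set w' : Fin 4 → ℝ := ![0,0,1,2] with hw'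
    set N : (Fin n → Fin 4) → Fin 4 → ℝ := fun v u => ν u + ∑ i : Fin n, R (v i) u with hN
    set D : (Fin n → Fin 4) → ℝ := fun v => 1 + ∑ i : Fin n, ∑ y, R (v i) y with hD
    set A : (Fin n → Fin 4) → ℝ := fun v => 1 + ∑ i : Fin n, w (v i) with hA
    set B : (Fin n → Fin 4) → ℝ := fun v => 1 + ∑ i : Fin n, w' (v i) with hB
    have hwnn : ∀ z : Fin 4, 0 ≤ w z := by
      intro z; fin_cases z <;> norm_num [hw]
    have hwnn' : ∀ z : Fin 4, 0 ≤ w' z := by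
      intro z; fin_cases z <;> norm_num [hw']
    have hR0 : ∀ z : Fin 4, R z 0 = w z * ν₁ := by
      intro z; fin_cases z <;> simp [hR, hw, Matrix.vecHead, Matrix.vecTail] <;> ring
    have hR1 : ∀ z : Fin 4, R z 1 = w z * ν₂ := by
      intro z; fin_cases z <;> simp [hR, hw, Matrix.vecHead, Matrix.vecTail] <;> ring
    have hR2 : ∀ z : Fin 4, R z 2 = w' z * ν₁ := by
      intro z; fin_cases z <;> simp [hR, hw', Matrix.vecHead, Matrix.vecTail] <;> ring
    have hR3 : ∀ z : Fin 4, R z 3 = w' z * ν₂ := by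
      intro z; fin_cases z <;> simp [hR, hw', Matrix.vecHead, Matrix.vecTail] <;> ring
    have hRsum : ∀ z : Fin 4, ∑ y, R z y = (w z + w' z) * (1/2) := by
      intro z; fin_cases z <;>
        simp [hR, hw, hw', Fin.sum_univ_four, Matrix.vecHead, Matrix.vecTail] <;> linarith
    have hA1 : ∀ v : Fin n → Fin 4, 1 ≤ A v := by
      intro v
      have : 0 ≤ ∑ i : Fin n, w (v i) := Finset.sum_nonneg fun i _ => hwnn _
      simp only [hA]; linarith
    have hB1 : ∀ v : Fin n → Fin 4, 1 ≤ B v := by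
      intro v
      have : 0 ≤ ∑ i : Fin n, w' (v i) := Finset.sum_nonneg fun i _ => hwnn' _
      simp only [hB]; linarith
    have hNmat : ∀ v : Fin n → Fin 4, N v = ![A v * ν₁, A v * ν₂, B v * ν₁, B v * ν₂] := by
      intro v; funext u
      have e0 : ∑ i : Fin n, R (v i) 0 = (∑ i : Fin n, w (v i)) * ν₁ := by
        rw [Finset.sum_congr rfl fun i _ => hR0 (v i), ← Finset.sum_mul]
      have e1 : ∑ i : Fin n, R (v i) 1 = (∑ i : Fin n, w (v i)) * ν₂ := by
        rw [Finset.sum_congr rfl fun i _ => hR1 (v i), ← Finset.sum_mul]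
      have e2 : ∑ i : Fin n, R (v i) 2 = (∑ i : Fin n, w' (v i)) * ν₁ := by
        rw [Finset.sum_congr rfl fun i _ => hR2 (v i), ← Finset.sum_mul]
      have e3 : ∑ i : Fin n, R (v i) 3 = (∑ i : Fin n, w' (v i)) * ν₂ := by
        rw [Finset.sum_congr rfl fun i _ => hR3 (v i), ← Finset.sum_mul]
      fin_cases u
      · simp only [hN, hA, hν]
        simp [Matrix.vecHead, Matrix.vecTail]
        rw [e0]; ring
      · simp only [hN, hA, hν]
        simp [Matrix.vecHead, Matrix.vecTail]
        rw [e1]; ring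
      · simp only [hN, hB, hν]
        simp [Matrix.vecHead, Matrix.vecTail]
        rw [e2]; ring
      · simp only [hN, hB, hν]
        simp [Matrix.vecHead, Matrix.vecTail]
        rw [e3]; ring
    have hABd : ∀ v : Fin n → Fin 4, A v + B v = 2 * D v := by
      intro v
      have e : ∑ i : Fin n, ∑ y, R (v i) y
          = (∑ i : Fin n, w (v i) + ∑ i : Fin n, w' (v i)) * (1/2) := by
        rw [Finset.sum_congr rfl fun i _ => hRsum (v i), ← Finset.sum_mul,
          Finset.sum_add_distrib]
      simp only [hA, hB, hD]; rw [e]; ring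
    have hD1 : ∀ v : Fin n → Fin 4, 1 ≤ D v := by
      intro v
      have := hABd v; have := hA1 v; have := hB1 v; linarith
    -- pointwise identification of predictive probabilities
    have hconst : ∀ (u : Fin 4) (ω : Ω),
        (ν u + ∑ i ∈ range n, R (Xseq i ω) u) / (1 + ∑ i ∈ range n, ∑ y, R (Xseq i ω) y)
          = N (fun i : Fin n => Xseq i ω) u / D (fun i : Fin n => Xseq i ω) := by
      intro u ω
      simp only [hN, hD]
      rw [← Fin.sum_univ_eq_sum_range (fun j => R (Xseq j ω) u) n,
        ← Fin.sum_univ_eq_sum_range (fun j => ∑ y, R (Xseq j ω) y) n]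
    have hfconst : ∀ ω : Ω,
        (ν x + ∑ i ∈ range (n+1), R (Xseq i ω) x) / (1 + ∑ i ∈ range (n+1), ∑ y, R (Xseq i ω) y)
          = (N (fun i : Fin n => Xseq i ω) x + R (Xseq n ω) x)
            / (D (fun i : Fin n => Xseq i ω) + ∑ y, R (Xseq n ω) y) := by
      intro ω
      rw [Finset.sum_range_succ, Finset.sum_range_succ]
      simp only [hN, hD]
      rw [← Fin.sum_univ_eq_sum_range (fun j => R (Xseq j ω) x) n,
        ← Fin.sum_univ_eq_sum_range (fun j => ∑ y, R (Xseq j ω) y) n]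
      ring
    -- measurability and integrability
    have hmeasq : ∀ (k : ℕ) (u : Fin 4), Measurable fun ω =>
        (ν u + ∑ i ∈ range k, R (Xseq i ω) u) / (1 + ∑ i ∈ range k, ∑ y, R (Xseq i ω) y) := by
      intro k u
      exact (measurable_const.add (Finset.measurable_sum _ fun i _ =>
          (measurable_of_countable (fun a => R a u)).comp (hXmeas i))).div
        (measurable_const.add (Finset.measurable_sum _ fun i _ =>
          (measurable_of_countable (fun a => ∑ y, R a y)).comp (hXmeas i)))
    have hbq : ∀ (k : ℕ) (u : Fin 4) (ω : Ω),
        |(ν u + ∑ i ∈ range k, R (Xseq i ω) u) / (1 + ∑ i ∈ range k, ∑ y, R (Xseq i ω) y)| ≤ 1 := by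
      intro k u ω
      have hnum0 : 0 ≤ ν u + ∑ i ∈ range k, R (Xseq i ω) u :=
        add_nonneg (hν0 u) (Finset.sum_nonneg fun i _ => Rnn _ _)
      have hden0 : 0 < 1 + ∑ i ∈ range k, ∑ y, R (Xseq i ω) y := by
        have : 0 ≤ ∑ i ∈ range k, ∑ y, R (Xseq i ω) y :=
          Finset.sum_nonneg fun i _ => Finset.sum_nonneg fun y _ => Rnn _ _
        linarith
      have hle : ν u + ∑ i ∈ range k, R (Xseq i ω) u
          ≤ 1 + ∑ i ∈ range k, ∑ y, R (Xseq i ω) y :=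
        add_le_add (hν1 u) (Finset.sum_le_sum fun i _ =>
          Finset.single_le_sum (f := fun y => R (Xseq i ω) y) (fun y _ => Rnn _ _)
            (Finset.mem_univ u))
      rw [abs_of_nonneg (div_nonneg hnum0 hden0.le)]
      exact div_le_one_of_le₀ hle hden0.le
    have habs : ∀ a b : ℝ, |a| ≤ 1 → 0 ≤ b → b ≤ 1 → |a * b| ≤ 1 := by
      intro a b ha hb0 hb1
      rw [abs_mul, abs_of_nonneg hb0]
      nlinarith [abs_nonneg a]
    have hindTmeas : ∀ T : Set (Fin n → Fin 4),
        Measurable fun ω => Set.indicator T (fun _ => (1:ℝ)) (fun i : Fin n => Xseq i ω) := by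
      intro T
      have : Measurable ((Set.indicator T fun _ => (1:ℝ)) ∘ (fun ω (i : Fin n) => Xseq i ω)) :=
        (measurable_of_countable _).comp hVmeas
      exact this
    have hindZmeas : ∀ z : Fin 4,
        Measurable fun ω => Set.indicator {z} (fun _ => (1:ℝ)) (Xseq n ω) := by
      intro z
      have : Measurable ((Set.indicator {z} fun _ => (1:ℝ)) ∘ Xseq n) :=
        (measurable_of_countable _).comp (hXmeas n)
      exact this
    have hIq : ∀ (k : ℕ) (u : Fin 4) (T : Set (Fin n → Fin 4)), Integrable (fun ω =>
        (ν u + ∑ i ∈ range k, R (Xseq i ω) u) / (1 + ∑ i ∈ range k, ∑ y, R (Xseq i ω) y)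
          * Set.indicator T (fun _ => (1:ℝ)) (fun i : Fin n => Xseq i ω)) P := by
      intro k u T
      refine mvps_integrable_of_bdd ((hmeasq k u).mul (hindTmeas T)) (C := 1) fun ω => ?_
      exact habs _ _ (hbq k u ω) (mvps_ind_bound _ _).1 (mvps_ind_bound _ _).2
    have hIzT : ∀ (z : Fin 4) (T : Set (Fin n → Fin 4)), Integrable (fun ω =>
        Set.indicator {z} (fun _ => (1:ℝ)) (Xseq n ω)
          * Set.indicator T (fun _ => (1:ℝ)) (fun i : Fin n => Xseq i ω)) P := by
      intro z T
      refine mvps_integrable_of_bdd ((hindZmeas z).mul (hindTmeas T)) (C := 1) fun ω => ?_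
      refine habs _ _ ?_ (mvps_ind_bound _ _).1 (mvps_ind_bound _ _).2
      rw [abs_of_nonneg (mvps_ind_bound _ _).1]; exact (mvps_ind_bound _ _).2
    -- predictive probability is constant on each atom {V = t}
    have hpointg : ∀ (u : Fin 4) (t : Fin n → Fin 4) (ω : Ω),
        (ν u + ∑ i ∈ range n, R (Xseq i ω) u) / (1 + ∑ i ∈ range n, ∑ y, R (Xseq i ω) y)
            * Set.indicator {t} (fun _ => (1:ℝ)) (fun i : Fin n => Xseq i ω)
          = (N t u / D t) * Set.indicator {t} (fun _ => (1:ℝ)) (fun i : Fin n => Xseq i ω) := by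
      intro u t ω
      by_cases h : (fun i : Fin n => Xseq i ω) = t
      · rw [hconst u ω, h]
      · rw [Set.indicator_of_notMem (by simpa using h), mul_zero, mul_zero]
    -- the martingale property on atoms
    have key_t : ∀ t : Fin n → Fin 4,
        ∫ ω, (ν x + ∑ i ∈ range (n+1), R (Xseq i ω) x) /
              (1 + ∑ i ∈ range (n+1), ∑ y, R (Xseq i ω) y)
            * Set.indicator {t} (fun _ => (1:ℝ)) (fun i : Fin n => Xseq i ω) ∂P
          = ∫ ω, (ν x + ∑ i ∈ range n, R (Xseq i ω) x) /
              (1 + ∑ i ∈ range n, ∑ y, R (Xseq i ω) y)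
            * Set.indicator {t} (fun _ => (1:ℝ)) (fun i : Fin n => Xseq i ω) ∂P := by
      intro t
      have hfsum : (fun ω => (ν x + ∑ i ∈ range (n+1), R (Xseq i ω) x) /
              (1 + ∑ i ∈ range (n+1), ∑ y, R (Xseq i ω) y)
            * Set.indicator {t} (fun _ => (1:ℝ)) (fun i : Fin n => Xseq i ω))
          = fun ω => ∑ z : Fin 4, ((N t x + R z x) / (D t + ∑ y, R z y)) *
              (Set.indicator {z} (fun _ => (1:ℝ)) (Xseq n ω) *
               Set.indicator {t} (fun _ => (1:ℝ)) (fun i : Fin n => Xseq i ω)) := by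
        funext ω
        rw [mvps_sum_pick' (fun z => (N t x + R z x) / (D t + ∑ y, R z y)) (Xseq n ω) _]
        by_cases h : (fun i : Fin n => Xseq i ω) = t
        · rw [hfconst ω, h]
        · rw [Set.indicator_of_notMem (by simpa using h), mul_zero, mul_zero]
      rw [hfsum, integral_finset_sum _ (fun z _ => ((hIzT z {t}).const_mul _))]
      have hzval : ∀ z : Fin 4,
          ∫ ω, Set.indicator {z} (fun _ => (1:ℝ)) (Xseq n ω) *
              Set.indicator {t} (fun _ => (1:ℝ)) (fun i : Fin n => Xseq i ω) ∂P
            = (N t z / D t) *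
              ∫ ω, Set.indicator {t} (fun _ => (1:ℝ)) (fun i : Fin n => Xseq i ω) ∂P := by
        intro z
        rw [hpred n z {t} (measurableSet_singleton t)]
        rw [show (fun ω => (ν z + ∑ i ∈ range n, R (Xseq i ω) z) /
              (1 + ∑ i ∈ range n, ∑ y, R (Xseq i ω) y) *
              Set.indicator {t} (fun _ => (1:ℝ)) (fun i : Fin n => Xseq i ω))
            = fun ω => (N t z / D t) *
              Set.indicator {t} (fun _ => (1:ℝ)) (fun i : Fin n => Xseq i ω)
          from funext fun ω => hpointg z t ω]
        exact integral_const_mul _ _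
      have hterm : ∀ z : Fin 4,
          ∫ ω, ((N t x + R z x) / (D t + ∑ y, R z y)) *
            (Set.indicator {z} (fun _ => (1:ℝ)) (Xseq n ω) *
             Set.indicator {t} (fun _ => (1:ℝ)) (fun i : Fin n => Xseq i ω)) ∂P
          = (((N t x + R z x) / (D t + ∑ y, R z y)) * (N t z / D t)) *
              ∫ ω, Set.indicator {t} (fun _ => (1:ℝ)) (fun i : Fin n => Xseq i ω) ∂P := by
        intro z
        rw [integral_const_mul, hzval z, ← mul_assoc]
      rw [Finset.sum_congr rfl fun z _ => hterm z, ← Finset.sum_mul]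
      have halg : ∑ z : Fin 4, ((N t x + R z x) / (D t + ∑ y, R z y)) * (N t z / D t)
          = N t x / D t := by
        have h := mvps_key_alg ν₁ (A t) (B t) (D t) h1 h12 (hA1 t) (hB1 t) (hABd t)
          R ν₂ hν2 hR x
        rw [hNmat t]
        exact h
      rw [halg]
      rw [show (fun ω => (ν x + ∑ i ∈ range n, R (Xseq i ω) x) /
              (1 + ∑ i ∈ range n, ∑ y, R (Xseq i ω) y) *
              Set.indicator {t} (fun _ => (1:ℝ)) (fun i : Fin n => Xseq i ω))
          = fun ω => (N t x / D t) *
              Set.indicator {t} (fun _ => (1:ℝ)) (fun i : Fin n => Xseq i ω)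
        from funext fun ω => hpointg x t ω]
      rw [integral_const_mul]
    -- integrability and measurability for the conditional expectation
    have hfint : Integrable (fun ω => (ν x + ∑ i ∈ range (n+1), R (Xseq i ω) x) /
        (1 + ∑ i ∈ range (n+1), ∑ y, R (Xseq i ω) y)) P :=
      mvps_integrable_of_bdd (hmeasq (n+1) x) (hbq (n+1) x)
    have hgint : Integrable (fun ω => (ν x + ∑ i ∈ range n, R (Xseq i ω) x) /
        (1 + ∑ i ∈ range n, ∑ y, R (Xseq i ω) y)) P :=
      mvps_integrable_of_bdd (hmeasq n x) (hbq n x)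
    have hgm : AEStronglyMeasurable[
        MeasurableSpace.comap (fun ω (i : Fin n) => Xseq i ω) inferInstance]
        (fun ω => (ν x + ∑ i ∈ range n, R (Xseq i ω) x) /
          (1 + ∑ i ∈ range n, ∑ y, R (Xseq i ω) y)) P := by
      refine StronglyMeasurable.aestronglyMeasurable (Measurable.stronglyMeasurable ?_)
      have he : (fun ω => (ν x + ∑ i ∈ range n, R (Xseq i ω) x) /
          (1 + ∑ i ∈ range n, ∑ y, R (Xseq i ω) y))
          = (fun v : Fin n → Fin 4 => N v x / D v) ∘ (fun ω (i : Fin n) => Xseq i ω) :=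
        funext fun ω => hconst x ω
      rw [he]
      exact Measurable.comp (measurable_of_countable _) (Measurable.of_comap_le le_rfl)
    have hg_eq : ∀ s : Set Ω,
        MeasurableSet[MeasurableSpace.comap (fun ω (i : Fin n) => Xseq i ω) inferInstance] s →
        P s < ⊤ →
        ∫ ω in s, (ν x + ∑ i ∈ range n, R (Xseq i ω) x) /
            (1 + ∑ i ∈ range n, ∑ y, R (Xseq i ω) y) ∂P
          = ∫ ω in s, (ν x + ∑ i ∈ range (n+1), R (Xseq i ω) x) /
            (1 + ∑ i ∈ range (n+1), ∑ y, R (Xseq i ω) y) ∂P := by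
      intro s hs _
      obtain ⟨T, hT, rfl⟩ := hs
      have hTm0 : MeasurableSet ((fun ω (i : Fin n) => Xseq i ω) ⁻¹' T) := hVmeas hT
      rw [← integral_indicator hTm0, ← integral_indicator hTm0]
      have hindk : ∀ k : ℕ,
          Set.indicator ((fun ω (i : Fin n) => Xseq i ω) ⁻¹' T)
            (fun ω => (ν x + ∑ i ∈ range k, R (Xseq i ω) x) /
              (1 + ∑ i ∈ range k, ∑ y, R (Xseq i ω) y))
          = fun ω => (ν x + ∑ i ∈ range k, R (Xseq i ω) x) /
              (1 + ∑ i ∈ range k, ∑ y, R (Xseq i ω) y)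
              * Set.indicator T (fun _ => (1:ℝ)) (fun i : Fin n => Xseq i ω) := by
        intro k; funext ω
        by_cases hω : (fun i : Fin n => Xseq i ω) ∈ T
        · rw [Set.indicator_of_mem (Set.mem_preimage.mpr hω),
            Set.indicator_of_mem hω, mul_one]
        · rw [Set.indicator_of_notMem (fun hc => hω (Set.mem_preimage.mp hc)),
            Set.indicator_of_notMem hω, mul_zero]
      rw [hindk n, hindk (n+1)]
      have hdeck : ∀ k : ℕ,
          (fun ω => (ν x + ∑ i ∈ range k, R (Xseq i ω) x) /
              (1 + ∑ i ∈ range k, ∑ y, R (Xseq i ω) y)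
              * Set.indicator T (fun _ => (1:ℝ)) (fun i : Fin n => Xseq i ω))
          = fun ω => ∑ t : Fin n → Fin 4, Set.indicator T (fun _ => (1:ℝ)) t *
              ((ν x + ∑ i ∈ range k, R (Xseq i ω) x) /
                (1 + ∑ i ∈ range k, ∑ y, R (Xseq i ω) y)
                * Set.indicator {t} (fun _ => (1:ℝ)) (fun i : Fin n => Xseq i ω)) := by
        intro k; funext ω
        rw [Finset.sum_eq_single (fun i : Fin n => Xseq i ω)]
        · rw [mvps_ind_mem (Set.mem_singleton _), mul_one]; ring
        · intro t _ ht
          rw [Set.indicator_of_notMem (s := ({t} : Set (Fin n → Fin 4)))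
            (a := fun i : Fin n => Xseq i ω) (by simpa using Ne.symm ht), mul_zero, mul_zero]
        · intro hmem; exact absurd (Finset.mem_univ _) hmem
      rw [hdeck n, hdeck (n+1)]
      rw [integral_finset_sum _ (fun t _ => ((hIq n x {t}).const_mul _)),
        integral_finset_sum _ (fun t _ => ((hIq (n+1) x {t}).const_mul _))]
      refine Finset.sum_congr rfl fun t _ => ?_
      rw [integral_const_mul, integral_const_mul, key_t t]
    exact (ae_eq_condExp_of_forall_setIntegral_eq hVmeas.comap_le hfint
      (fun s _ _ => hgint.integrableOn) hg_eq hgm).symm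
  · simp [hR, Fin.sum_univ_four]; linarith
  · simp [hR, Fin.sum_univ_four]; linarith
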